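/- If j = ⌊αn⌋ for a fixed α ∈ (0,1), the inner product ⟨e^j, e^{j+1}⟩ of the neighbouring change-point basis vectors tends to 1 as n → ∞ (asymptotic collinearity of the design matrix). -/

import Mathlib

open Finset Filter

/-- The change-point basis vector `e^k` in `ℝ^n` (0-indexed entries). -/
noncomputable def cpBasis (n k : ℕ) (i : Fin n) : ℝ :=
  if (i : ℕ) + 1 ≤ k then Real.sqrt (((n : ℝ) - k) / (n * k))
  else - Real.sqrt ((k : ℝ) / (n * ((n : ℝ) - k)))

lemma sqrt_mul_sqrt_eq {a b c d : ℝ} (ha : 0 ≤ a) (hc : 0 ≤ c)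
    (h : a * b = c ^ 2 * d) : Real.sqrt a * Real.sqrt b = c * Real.sqrt d := by
  rw [← Real.sqrt_mul ha, h, Real.sqrt_mul (by positivity), Real.sqrt_sq hc]

lemma inner_formula (n j : ℕ) (hj : 1 ≤ j) (hn : j + 2 ≤ n) :
    ∑ i : Fin n, cpBasis n j i * cpBasis n (j + 1) i
      = Real.sqrt ((j * ((n : ℝ) - j - 1)) / ((j + 1) * ((n : ℝ) - j))) := by
  have hj1 : (1 : ℝ) ≤ (j : ℝ) := by exact_mod_cast hj
  have hnj : (j : ℝ) + 2 ≤ (n : ℝ) := by exact_mod_cast hn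
  have hj0 : (0 : ℝ) < j := by linarith
  have hn0 : (0 : ℝ) < n := by linarith
  have h1 : (0 : ℝ) < (n : ℝ) - j := by linarith
  have h2 : (0 : ℝ) < (n : ℝ) - j - 1 := by linarith
  set A : ℝ := Real.sqrt (((n : ℝ) - j) / (n * j)) with hA
  set B : ℝ := Real.sqrt ((j : ℝ) / (n * ((n : ℝ) - j))) with hB
  set C : ℝ := Real.sqrt (((n : ℝ) - j - 1) / (n * ((j:ℝ)+1))) with hC
  set D : ℝ := Real.sqrt (((j:ℝ)+1) / (n * ((n : ℝ) - j - 1))) with hD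
  set s : ℝ := Real.sqrt ((j * ((n : ℝ) - j - 1)) / ((j + 1) * ((n : ℝ) - j))) with hs
  have key : ∑ i : Fin n, cpBasis n j i * cpBasis n (j + 1) i
      = (j : ℝ) * (A * C) + (-B * C) + ((n : ℝ) - j - 1) * (B * D) := by
    have hF : ∀ i : Fin n, cpBasis n j i * cpBasis n (j + 1) i
        = (fun m : ℕ => (if m + 1 ≤ j then A else -B) * (if m + 1 ≤ j + 1 then C else -D)) i := by
      intro i
      simp only [cpBasis, hA, hB, hC, hD]
      push_cast
      ring_nf
    rw [Finset.sum_congr rfl (fun i _ => hF i),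
      Fin.sum_univ_eq_sum_range (fun m => (if m + 1 ≤ j then A else -B) * (if m + 1 ≤ j + 1 then C else -D)) n]
    rw [Finset.range_eq_Ico, ← Finset.sum_Ico_consecutive _ (Nat.zero_le j) (by omega : j ≤ n),
      Finset.sum_eq_sum_Ico_succ_bot (by omega : j < n)]
    have e1 : ∑ m ∈ Finset.Ico 0 j,
        (if m + 1 ≤ j then A else -B) * (if m + 1 ≤ j + 1 then C else -D) = (j : ℝ) * (A * C) := by
      rw [Finset.sum_congr rfl (g := fun _ => A * C)
        (fun m hm => by simp only [Finset.mem_Ico] at hm; rw [if_pos (by omega), if_pos (by omega)]),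
        Finset.sum_const]
      simp [Nat.card_Ico]
    have e2 : ∑ m ∈ Finset.Ico (j+1) n,
        (if m + 1 ≤ j then A else -B) * (if m + 1 ≤ j + 1 then C else -D)
        = ((n : ℝ) - j - 1) * (B * D) := by
      rw [Finset.sum_congr rfl (g := fun _ => B * D)
        (fun m hm => by simp only [Finset.mem_Ico] at hm
                        rw [if_neg (by omega), if_neg (by omega)]; ring),
        Finset.sum_const]
      rw [Nat.card_Ico, nsmul_eq_mul]
      congr 1
      push_cast [Nat.cast_sub (by omega : j + 1 ≤ n)]
      ring
    rw [e1, e2, if_neg (by omega), if_pos (by omega)]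
    ring
  rw [key]
  have t1 : A * C = (((n:ℝ) - j) / (n * j)) * s := by
    rw [hA, hC, hs]
    apply sqrt_mul_sqrt_eq (by positivity) (by positivity)
    field_simp
  have t2 : B * C = (1 / (n : ℝ)) * s := by
    rw [hB, hC, hs]
    apply sqrt_mul_sqrt_eq (by positivity) (by positivity)
    field_simp
  have t3 : B * D = (((j:ℝ)+1) / (n * ((n:ℝ) - j - 1))) * s := by
    rw [hB, hD, hs]
    apply sqrt_mul_sqrt_eq (by positivity) (by positivity)
    field_simp
  rw [t1, neg_mul, t2, t3]
  field_simp
  ring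

/-- asymptotic collinearity. With `j = j(n) = ⌊α n⌋` for fixed
`α ∈ (0,1)`, the inner product `⟨e^j, e^{j+1}⟩` tends to `1` as `n → ∞`. -/
theorem changepoint_basis_asymptotic_collinearity
    (α : ℝ) (hα0 : 0 < α) (hα1 : α < 1) :
    Tendsto (fun n : ℕ =>
        ∑ i : Fin n, cpBasis n ⌊α * n⌋₊ i * cpBasis n (⌊α * n⌋₊ + 1) i)
      atTop (nhds 1) := by
  have hmul : Tendsto (fun n : ℕ => α * (n : ℝ)) atTop atTop :=
    (tendsto_natCast_atTop_atTop).const_mul_atTop hα0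
  have hfloor : Tendsto (fun n : ℕ => (⌊α * (n : ℝ)⌋₊ : ℕ)) atTop atTop :=
    tendsto_nat_floor_atTop.comp hmul
  -- n - floor tends to atTop
  have hrem : Tendsto (fun n : ℕ => (n : ℝ) - (⌊α * (n : ℝ)⌋₊ : ℝ)) atTop atTop := by
    have hbase : Tendsto (fun n : ℕ => (1 - α) * (n : ℝ)) atTop atTop :=
      (tendsto_natCast_atTop_atTop).const_mul_atTop (by linarith)
    apply tendsto_atTop_mono _ hbase
    intro n
    have := Nat.floor_le (by positivity : (0:ℝ) ≤ α * n)
    nlinarith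
  -- factor 1
  have h1 : Tendsto (fun n : ℕ => (⌊α * (n : ℝ)⌋₊ : ℝ) / ((⌊α * (n : ℝ)⌋₊ : ℝ) + 1))
      atTop (nhds 1) := by
    have : Tendsto (fun m : ℕ => (m : ℝ) / ((m : ℝ) + 1)) atTop (nhds 1) := by
      have h0 : Tendsto (fun m : ℕ => 1 - 1 / ((m : ℝ) + 1)) atTop (nhds (1 - 0)) :=
        tendsto_const_nhds.sub tendsto_one_div_add_atTop_nhds_zero_nat
      simp only [sub_zero] at h0
      apply h0.congr
      intro m
      have : (m : ℝ) + 1 ≠ 0 := by positivity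
      field_simp
      ring
    exact this.comp hfloor
  -- factor 2
  have h2 : Tendsto (fun n : ℕ => ((n : ℝ) - (⌊α * (n : ℝ)⌋₊ : ℝ) - 1) /
      ((n : ℝ) - (⌊α * (n : ℝ)⌋₊ : ℝ))) atTop (nhds 1) := by
    have hinv : Tendsto (fun n : ℕ => 1 / ((n : ℝ) - (⌊α * (n : ℝ)⌋₊ : ℝ))) atTop (nhds 0) :=
      tendsto_inv_atTop_zero.comp hrem |>.congr (fun n => (one_div _).symm)
    have h0 : Tendsto (fun n : ℕ => 1 - 1 / ((n : ℝ) - (⌊α * (n : ℝ)⌋₊ : ℝ)))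
        atTop (nhds (1 - 0)) := tendsto_const_nhds.sub hinv
    simp only [sub_zero] at h0
    apply h0.congr'
    filter_upwards [hrem.eventually_gt_atTop 0] with n hn
    rw [sub_div, div_self hn.ne']
  have hprod : Tendsto (fun n : ℕ =>
      ((⌊α * (n : ℝ)⌋₊ : ℝ) * ((n : ℝ) - (⌊α * (n : ℝ)⌋₊ : ℝ) - 1)) /
      (((⌊α * (n : ℝ)⌋₊ : ℝ) + 1) * ((n : ℝ) - (⌊α * (n : ℝ)⌋₊ : ℝ))))
      atTop (nhds 1) := by
    have := h1.mul h2
    rw [mul_one] at this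
    apply this.congr'
    filter_upwards [hfloor.eventually_ge_atTop 1, hrem.eventually_gt_atTop 1] with n hn1 hn2
    have ha : ((⌊α * (n : ℝ)⌋₊ : ℝ) + 1) ≠ 0 := by positivity
    have hb : ((n : ℝ) - (⌊α * (n : ℝ)⌋₊ : ℝ)) ≠ 0 := by linarith
    field_simp
  have hsqrt : Tendsto (fun n : ℕ =>
      Real.sqrt (((⌊α * (n : ℝ)⌋₊ : ℝ) * ((n : ℝ) - (⌊α * (n : ℝ)⌋₊ : ℝ) - 1)) /
      (((⌊α * (n : ℝ)⌋₊ : ℝ) + 1) * ((n : ℝ) - (⌊α * (n : ℝ)⌋₊ : ℝ)))))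
      atTop (nhds 1) := by
    have := hprod.sqrt
    rwa [Real.sqrt_one] at this
  apply hsqrt.congr'
  filter_upwards [hfloor.eventually_ge_atTop 1, hrem.eventually_ge_atTop 3] with n hn1 hn2
  have hle : (⌊α * (n : ℝ)⌋₊ : ℝ) ≤ (n : ℝ) - 3 := by linarith
  have hn' : ⌊α * (n : ℝ)⌋₊ + 2 ≤ n := by
    have : (⌊α * (n : ℝ)⌋₊ : ℝ) + 2 ≤ (n : ℝ) := by linarith
    exact_mod_cast this
  exact (inner_formula n ⌊α * (n : ℝ)⌋₊ hn1 hn').symm
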